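/- arXiv:1504.02636 — 2 statements merged into one kernel-verified Lean document; each statement's English description precedes it below -/
import Mathlib

section
/- Let a ≤ 0, R > 0, θ ∈ (0,1), and suppose (1-θ)R² ≥ -a(n - min(a+2, 0)). Then the function Λ(x) = (R² + |x|²)^{-a/2} on ℝⁿ satisfies Λ(x) - ΔΛ(x) ≥ θ Λ(x) for all x ∈ ℝⁿ. -/
open EuclideanSpace Real

variable {n : ℕ}

lemma hasFDerivAt_Lam (c p : ℝ) (hc : 0 < c) (y : EuclideanSpace ℝ (Fin n)) :
    HasFDerivAt (fun y : EuclideanSpace ℝ (Fin n) => (c + ‖y‖ ^ (2:ℕ)) ^ p)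
      ((p * (c + ‖y‖ ^ (2:ℕ)) ^ (p - 1)) • (2 • innerSL ℝ y)) y := by
  have h1 : HasFDerivAt (fun y : EuclideanSpace ℝ (Fin n) => c + ‖y‖ ^ (2:ℕ))
      (2 • innerSL ℝ y) y := by
    exact (hasStrictFDerivAt_norm_sq y).hasFDerivAt.const_add c
  have h2 : HasDerivAt (fun t : ℝ => t ^ p) (p * (c + ‖y‖ ^ (2:ℕ)) ^ (p - 1))
      (c + ‖y‖ ^ (2:ℕ)) := Real.hasDerivAt_rpow_const (Or.inl (by positivity))
  exact h2.comp_hasFDerivAt y h1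

lemma fderiv_Lam (c p : ℝ) (hc : 0 < c) (y : EuclideanSpace ℝ (Fin n)) (i : Fin n) :
    fderiv ℝ (fun y : EuclideanSpace ℝ (Fin n) => (c + ‖y‖ ^ (2:ℕ)) ^ p) y
      (EuclideanSpace.single i 1)
      = 2 * p * (c + ‖y‖ ^ (2:ℕ)) ^ (p - 1) * y i := by
  rw [(hasFDerivAt_Lam c p hc y).fderiv]
  simp [EuclideanSpace.inner_single_right, real_inner_comm]
  ring

lemma hasFDerivAt_g (c p : ℝ) (hc : 0 < c) (x : EuclideanSpace ℝ (Fin n)) (i : Fin n) :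
    HasFDerivAt (fun y : EuclideanSpace ℝ (Fin n) =>
        2 * p * (c + ‖y‖ ^ (2:ℕ)) ^ (p - 1) * y i)
      ((2 * p) • (((c + ‖x‖ ^ (2:ℕ)) ^ (p - 1)) • (EuclideanSpace.proj i : EuclideanSpace ℝ (Fin n) →L[ℝ] ℝ)
        + x i • ((p - 1) * (c + ‖x‖ ^ (2:ℕ)) ^ (p - 1 - 1)) • (2 • innerSL ℝ x))) x := by
  have h1 := hasFDerivAt_Lam c (p - 1) hc x
  have h2 : HasFDerivAt (fun y : EuclideanSpace ℝ (Fin n) => y i)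
      (EuclideanSpace.proj i : EuclideanSpace ℝ (Fin n) →L[ℝ] ℝ) x :=
    (EuclideanSpace.proj i : EuclideanSpace ℝ (Fin n) →L[ℝ] ℝ).hasFDerivAt
  have h3 := (h1.mul h2).const_mul (2 * p)
  refine h3.congr_of_eventuallyEq (Filter.Eventually.of_forall fun y => ?_)
  simp only [Pi.mul_apply]; ring

lemma second_deriv (c p : ℝ) (hc : 0 < c) (x : EuclideanSpace ℝ (Fin n)) (i : Fin n) :
    fderiv ℝ (fun y => fderiv ℝ
        (fun z : EuclideanSpace ℝ (Fin n) => (c + ‖z‖ ^ (2:ℕ)) ^ p) y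
        (EuclideanSpace.single i 1)) x (EuclideanSpace.single i 1)
      = 2 * p * (c + ‖x‖ ^ (2:ℕ)) ^ (p - 1)
        + 4 * p * (p - 1) * (c + ‖x‖ ^ (2:ℕ)) ^ (p - 2) * (x i) ^ (2:ℕ) := by
  have hfe : (fun y => fderiv ℝ
      (fun z : EuclideanSpace ℝ (Fin n) => (c + ‖z‖ ^ (2:ℕ)) ^ p) y
      (EuclideanSpace.single i 1))
      = fun y : EuclideanSpace ℝ (Fin n) => 2 * p * (c + ‖y‖ ^ (2:ℕ)) ^ (p - 1) * y i :=
    funext fun y => fderiv_Lam c p hc y i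
  rw [hfe, (hasFDerivAt_g c p hc x i).fderiv]
  simp [EuclideanSpace.inner_single_right, real_inner_comm]
  rw [show p - 1 - 1 = p - 2 by ring]
  ring

lemma lap_Lam (c p : ℝ) (hc : 0 < c) (x : EuclideanSpace ℝ (Fin n)) :
    (∑ i : Fin n, fderiv ℝ (fun y => fderiv ℝ
        (fun z : EuclideanSpace ℝ (Fin n) => (c + ‖z‖ ^ (2:ℕ)) ^ p) y
        (EuclideanSpace.single i 1)) x (EuclideanSpace.single i 1))
      = 2 * p * n * (c + ‖x‖ ^ (2:ℕ)) ^ (p - 1)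
        + 4 * p * (p - 1) * (c + ‖x‖ ^ (2:ℕ)) ^ (p - 2) * ‖x‖ ^ (2:ℕ) := by
  have hsum : ∑ i : Fin n, (x i) ^ (2:ℕ) = ‖x‖ ^ (2:ℕ) := by
    rw [← real_inner_self_eq_norm_sq, PiLp.inner_apply]
    simp [sq]
  calc ∑ i : Fin n, fderiv ℝ (fun y => fderiv ℝ
        (fun z : EuclideanSpace ℝ (Fin n) => (c + ‖z‖ ^ (2:ℕ)) ^ p) y
        (EuclideanSpace.single i 1)) x (EuclideanSpace.single i 1)
      = ∑ i : Fin n, (2 * p * (c + ‖x‖ ^ (2:ℕ)) ^ (p - 1)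
        + 4 * p * (p - 1) * (c + ‖x‖ ^ (2:ℕ)) ^ (p - 2) * (x i) ^ (2:ℕ)) :=
        Finset.sum_congr rfl fun i _ => second_deriv c p hc x i
    _ = _ := by
        rw [Finset.sum_add_distrib, Finset.sum_const, ← Finset.mul_sum, hsum]
        simp [Finset.card_univ]
        ring

/-- The Laplacian of a real-valued function on `EuclideanSpace ℝ (Fin n)`,
as the sum of second partial derivatives in the coordinate directions. -/
noncomputable def lap {n : ℕ} (f : EuclideanSpace ℝ (Fin n) → ℝ)
    (x : EuclideanSpace ℝ (Fin n)) : ℝ :=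
  ∑ i : Fin n, fderiv ℝ (fun y => fderiv ℝ f y (EuclideanSpace.single i 1)) x
    (EuclideanSpace.single i 1)

theorem stmt4 (n : ℕ) (hn : 1 ≤ n) (a R θ : ℝ) (ha : a ≤ 0) (hR : 0 < R)
    (hθ0 : 0 < θ) (hθ1 : θ < 1)
    (hcond : -a * (n - min (a + 2) 0) ≤ (1 - θ) * R ^ (2:ℕ)) :
    ∀ x : EuclideanSpace ℝ (Fin n),
      θ * (R ^ (2:ℕ) + ‖x‖ ^ (2:ℕ)) ^ (-a/2) ≤
        (R ^ (2:ℕ) + ‖x‖ ^ (2:ℕ)) ^ (-a/2)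
          - lap (fun y => (R ^ (2:ℕ) + ‖y‖ ^ (2:ℕ)) ^ (-a/2)) x := by
  intro x
  have hc : (0:ℝ) < R ^ (2:ℕ) := by positivity
  set t := ‖x‖ ^ (2:ℕ) with htdef
  have ht : 0 ≤ t := by positivity
  set S := R ^ (2:ℕ) + t with hSdef
  have hS0 : (0:ℝ) < S := by positivity
  have hlap : lap (fun y => (R ^ (2:ℕ) + ‖y‖ ^ (2:ℕ)) ^ (-a/2)) x
      = 2 * (-a/2) * n * S ^ ((-a/2) - 1)
        + 4 * (-a/2) * ((-a/2) - 1) * S ^ ((-a/2) - 2) * t := by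
    unfold lap
    exact lap_Lam (R ^ (2:ℕ)) (-a/2) hc x
  have key : (-a) * n * S + (a * (a + 2)) * t ≤ (1 - θ) * S ^ (2:ℕ) := by
    rw [hSdef]
    have hSt : (0:ℝ) ≤ R ^ (2:ℕ) + t := by positivity
    have h7 : 0 ≤ (1 - θ) * (R ^ (2:ℕ) + t) * t :=
      mul_nonneg (mul_nonneg (by linarith) hSt) ht
    rcases le_or_gt 0 (a + 2) with h2 | h2
    · rw [min_eq_right h2] at hcond
      have h3 : a * (a + 2) * t ≤ 0 :=
        mul_nonpos_of_nonpos_of_nonneg (mul_nonpos_of_nonpos_of_nonneg ha h2) ht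
      have h4 := mul_le_mul_of_nonneg_right hcond hSt
      nlinarith [h3, h4, h7]
    · rw [min_eq_left h2.le] at hcond
      have h4 := mul_le_mul_of_nonneg_right hcond hSt
      have h5 : 0 < a * (a + 2) := mul_pos_of_neg_of_neg (by linarith) h2
      have h6 := mul_le_mul_of_nonneg_left (show t ≤ R ^ (2:ℕ) + t by linarith) h5.le
      nlinarith [h4, h6, h7]
  have hq : (0:ℝ) ≤ S ^ ((-a/2) - 2) := Real.rpow_nonneg hS0.le _
  have h1 : S ^ ((-a/2) - 1) = S * S ^ ((-a/2) - 2) := by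
    rw [show (-a/2) - 1 = 1 + ((-a/2) - 2) by ring, Real.rpow_add hS0, Real.rpow_one]
  have h2 : S ^ (2:ℕ) * S ^ ((-a/2) - 2) = S ^ (-a/2) := by
    rw [← Real.rpow_natCast S 2, ← Real.rpow_add hS0]
    norm_num
  have hmul := mul_le_mul_of_nonneg_right key hq
  rw [hlap, ← h2, h1]
  nlinarith [hmul, sq_nonneg S]
end

section
/- Let n ≥ 1, d ≥ 0. There exist constants ρ₀, k₀ > 0 depending only on n and d such that for all ρ ≥ ρ₀ and k ≥ k₀, the function U(x,t) = (ρ + kt + |x|²)^{d/2} satisfies ∂ₜU - ∂ₜΔU ≥ ΔU on ℝⁿ × (0,∞), where Δ is the spatial Laplacian. In fact one may take ρ₀ = 2|(d-2)|(n + |d-4|) and k₀ = 4(n + |d-2|). -/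
section aux

open Real

variable {n : ℕ}

lemma hasFDerivAt_U (p c : ℝ) (hc : 0 < c) (y : EuclideanSpace ℝ (Fin n)) :
    HasFDerivAt (fun y : EuclideanSpace ℝ (Fin n) => (c + ‖y‖ ^ (2:ℕ)) ^ p)
      ((p * (c + ‖y‖ ^ (2:ℕ)) ^ (p - 1)) • ((2:ℕ) • innerSL ℝ y)) y := by
  have h1 : HasFDerivAt (fun y : EuclideanSpace ℝ (Fin n) => c + ‖y‖ ^ (2:ℕ))
      ((2:ℕ) • innerSL ℝ y) y :=
    (hasStrictFDerivAt_norm_sq y).hasFDerivAt.const_add c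
  have hpos : (0:ℝ) < c + ‖y‖ ^ (2:ℕ) := by positivity
  exact h1.rpow_const (Or.inl hpos.ne')

lemma fderiv_U (p c : ℝ) (hc : 0 < c) (y : EuclideanSpace ℝ (Fin n)) (i : Fin n) :
    fderiv ℝ (fun y : EuclideanSpace ℝ (Fin n) => (c + ‖y‖ ^ (2:ℕ)) ^ p) y
      (EuclideanSpace.single i 1)
    = 2 * p * ((c + ‖y‖ ^ (2:ℕ)) ^ (p - 1) * y i) := by
  rw [(hasFDerivAt_U p c hc y).fderiv]
  simp [EuclideanSpace.inner_single_right]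
  ring

lemma norm_sq_eq_sum (x : EuclideanSpace ℝ (Fin n)) :
    ‖x‖ ^ (2:ℕ) = ∑ i, x i ^ (2:ℕ) := by
  rw [EuclideanSpace.norm_eq, Real.sq_sqrt (by positivity)]
  simp [Real.norm_eq_abs, sq_abs]

lemma lap_formula (d c : ℝ) (hc : 0 < c) (x : EuclideanSpace ℝ (Fin n)) :
    lap (fun y => (c + ‖y‖ ^ (2:ℕ)) ^ (d/2)) x
      = d * (d - 2) * (c + ‖x‖ ^ (2:ℕ)) ^ (d/2 - 2) * ‖x‖ ^ (2:ℕ)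
        + n * d * (c + ‖x‖ ^ (2:ℕ)) ^ (d/2 - 1) := by
  have hpos : (0:ℝ) < c + ‖x‖ ^ (2:ℕ) := by positivity
  have key : ∀ i : Fin n,
      fderiv ℝ (fun y => fderiv ℝ (fun y : EuclideanSpace ℝ (Fin n) =>
          (c + ‖y‖ ^ (2:ℕ)) ^ (d/2)) y (EuclideanSpace.single i 1)) x
        (EuclideanSpace.single i 1)
      = 2 * (d/2) * ((d/2 - 1) * (c + ‖x‖ ^ (2:ℕ)) ^ (d/2 - 2) * (2 * x i) * x i
          + (c + ‖x‖ ^ (2:ℕ)) ^ (d/2 - 1)) := by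
    intro i
    have hfun : (fun y => fderiv ℝ (fun y : EuclideanSpace ℝ (Fin n) =>
          (c + ‖y‖ ^ (2:ℕ)) ^ (d/2)) y (EuclideanSpace.single i 1))
        = fun y => 2 * (d/2) * ((c + ‖y‖ ^ (2:ℕ)) ^ (d/2 - 1) * y i) := by
      funext y; exact fderiv_U (d/2) c hc y i
    rw [hfun]
    have hA : HasFDerivAt (fun y : EuclideanSpace ℝ (Fin n) => (c + ‖y‖ ^ (2:ℕ)) ^ (d/2 - 1))
        (((d/2 - 1) * (c + ‖x‖ ^ (2:ℕ)) ^ (d/2 - 1 - 1)) • ((2:ℕ) • innerSL ℝ x)) x :=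
      hasFDerivAt_U (d/2 - 1) c hc x
    have hB : HasFDerivAt (fun y : EuclideanSpace ℝ (Fin n) => y i)
        (EuclideanSpace.proj (𝕜 := ℝ) i) x := (EuclideanSpace.proj (𝕜 := ℝ) i).hasFDerivAt
    have hprod : HasFDerivAt (fun y : EuclideanSpace ℝ (Fin n) =>
        2 * (d/2) * ((c + ‖y‖ ^ (2:ℕ)) ^ (d/2 - 1) * y i)) _ x :=
      (hA.mul hB).const_mul (2 * (d/2))
    rw [hprod.fderiv]
    have h1 : (d/2 - 1 - 1) = d/2 - 2 := by ring
    simp [h1, EuclideanSpace.inner_single_right, EuclideanSpace.single_apply]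
    ring
  unfold lap
  rw [Finset.sum_congr rfl (fun i _ => key i)]
  have hsum := norm_sq_eq_sum x
  have hre : ∀ i : Fin n,
      2 * (d/2) * ((d/2 - 1) * (c + ‖x‖ ^ (2:ℕ)) ^ (d/2 - 2) * (2 * x i) * x i
          + (c + ‖x‖ ^ (2:ℕ)) ^ (d/2 - 1))
      = d * (d - 2) * (c + ‖x‖ ^ (2:ℕ)) ^ (d/2 - 2) * x i ^ (2:ℕ)
          + d * (c + ‖x‖ ^ (2:ℕ)) ^ (d/2 - 1) := by
    intro i; ring
  rw [Finset.sum_congr rfl (fun i _ => hre i), Finset.sum_add_distrib, ← Finset.mul_sum,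
    ← hsum, Finset.sum_const, Finset.card_univ, Fintype.card_fin, nsmul_eq_mul]
  ring

lemma keyineq (N d S k r : ℝ) (hn : 1 ≤ N) (hd : 0 ≤ d)
    (hS : 2*(d+2)*(N+d+4)+1 ≤ S) (hk : 4*(N+d+2)+1 ≤ k)
    (hr : 0 ≤ r) (hrS : r ≤ S) :
    2*(d-2)*S*r + 2*N*(S*S) ≤ k*(S*S) - (d-2)*(d-4)*k*r - N*(d-2)*k*S := by
  have hS0 : 0 < S := by nlinarith
  have hk0 : 0 < k := by nlinarith
  have h1 : (d-2)*(d-4)*r ≤ (d+2)*(d+4)*S := by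
    rcases le_or_gt 0 ((d-2)*(d-4)) with h|h
    · nlinarith [mul_le_mul_of_nonneg_left hrS h]
    · nlinarith [mul_nonpos_of_nonpos_of_nonneg h.le hr,
        mul_nonneg (by nlinarith : (0:ℝ) ≤ (d+2)*(d+4)) hS0.le]
  have h2 : N*(d-2)*S ≤ N*(d+2)*S := by nlinarith
  have h3 : 2*(d-2)*S*r ≤ 2*(d+2)*(S*S) := by
    rcases le_or_gt 0 (d-2) with h|h
    · nlinarith [mul_le_mul_of_nonneg_left hrS (mul_nonneg (by linarith : (0:ℝ) ≤ 2*(d-2)) hS0.le),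
        mul_pos hS0 hS0]
    · nlinarith [mul_nonneg hS0.le hr, mul_pos hS0 hS0]
  have h4 : k*(S*S) - (d-2)*(d-4)*k*r - N*(d-2)*k*S ≥ k/2 * (S*S) := by
    have e1 := mul_le_mul_of_nonneg_left h1 hk0.le
    have e2 := mul_le_mul_of_nonneg_left h2 hk0.le
    nlinarith [mul_le_mul_of_nonneg_left hS (mul_pos hk0 hS0).le]
  have h5 : 2*(d-2)*S*r + 2*N*(S*S) ≤ k/2 * (S*S) := by
    nlinarith [mul_pos hS0 hS0]
  linarith

end aux

theorem stmt7 (n : ℕ) (hn : 1 ≤ n) (d : ℝ) (hd : 0 ≤ d) :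
    ∃ ρ₀ > (0:ℝ), ∃ k₀ > (0:ℝ),
      ∀ ρ k : ℝ, ρ₀ ≤ ρ → k₀ ≤ k →
        ∀ (x : EuclideanSpace ℝ (Fin n)) (t : ℝ), 0 < t →
          lap (fun y => (ρ + k * t + ‖y‖ ^ (2:ℕ)) ^ (d/2)) x ≤
            deriv (fun s => (ρ + k * s + ‖x‖ ^ (2:ℕ)) ^ (d/2)) t -
              deriv (fun s => lap (fun y => (ρ + k * s + ‖y‖ ^ (2:ℕ)) ^ (d/2)) x) t := by
  refine ⟨2*(d+2)*((n:ℝ)+d+4)+1, by positivity, 4*((n:ℝ)+d+2)+1, by positivity,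
    fun ρ k hρ hk x t ht => ?_⟩
  have hnR : (1:ℝ) ≤ (n:ℝ) := by exact_mod_cast hn
  have hρ0 : (0:ℝ) < ρ := lt_of_lt_of_le (by positivity) hρ
  have hk0 : (0:ℝ) < k := lt_of_lt_of_le (by positivity) hk
  set r2 := ‖x‖ ^ (2:ℕ) with hr2def
  have hr2 : (0:ℝ) ≤ r2 := by positivity
  have hkt : (0:ℝ) < k * t := mul_pos hk0 ht
  have hc : (0:ℝ) < ρ + k * t := by linarith
  have hSpos : (0:ℝ) < ρ + k * t + r2 := by linarith
  -- laplacian at time t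
  rw [lap_formula d (ρ + k * t) hc x, ← hr2def]
  -- time derivative of U
  have hbase : HasDerivAt (fun s : ℝ => ρ + k * s + r2) k t := by
    simpa using (((hasDerivAt_id t).const_mul k).const_add ρ).add_const r2
  have hU : HasDerivAt (fun s : ℝ => (ρ + k * s + r2) ^ (d/2))
      (k * (d/2) * (ρ + k * t + r2) ^ (d/2 - 1)) t :=
    hbase.rpow_const (Or.inl hSpos.ne')
  rw [hU.deriv]
  -- time derivative of the laplacian
  have hev : (fun s => lap (fun y => (ρ + k * s + ‖y‖ ^ (2:ℕ)) ^ (d/2)) x)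
      =ᶠ[nhds t] fun s =>
        d * (d - 2) * (ρ + k * s + r2) ^ (d/2 - 2) * r2
          + n * d * (ρ + k * s + r2) ^ (d/2 - 1) := by
    have hopen : IsOpen {s : ℝ | 0 < ρ + k * s} :=
      isOpen_lt continuous_const (by fun_prop)
    filter_upwards [hopen.mem_nhds (show t ∈ {s : ℝ | 0 < ρ + k * s} from hc)] with s hs
    exact lap_formula d (ρ + k * s) hs x
  rw [hev.deriv_eq]
  have hG : HasDerivAt (fun s =>
        d * (d - 2) * (ρ + k * s + r2) ^ (d/2 - 2) * r2
          + n * d * (ρ + k * s + r2) ^ (d/2 - 1))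
      ((d * (d - 2) * (k * (d/2 - 2) * (ρ + k * t + r2) ^ (d/2 - 2 - 1))) * r2
        + n * d * (k * (d/2 - 1) * (ρ + k * t + r2) ^ (d/2 - 1 - 1))) t :=
    (((hbase.rpow_const (Or.inl hSpos.ne')).const_mul (d * (d - 2))).mul_const r2).add
      ((hbase.rpow_const (Or.inl hSpos.ne')).const_mul (↑n * d))
  rw [hG.deriv]
  -- reduce to a polynomial inequality
  set S := ρ + k * t + r2 with hSdef
  have hm : (0:ℝ) < S ^ (d/2 - 3) := Real.rpow_pos_of_pos hSpos _
  set m := S ^ (d/2 - 3) with hmdef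
  have e3 : S ^ (d/2 - 2 - 1) = m := by rw [show d/2 - 2 - 1 = d/2 - 3 by ring, hmdef]
  have e2 : S ^ (d/2 - 2) = m * S := by
    rw [show d/2 - 2 = d/2 - 3 + 1 by ring, Real.rpow_add hSpos, Real.rpow_one, hmdef]
  have e4 : S ^ (d/2 - 1 - 1) = m * S := by
    rw [show d/2 - 1 - 1 = d/2 - 2 by ring]; exact e2
  have e1 : S ^ (d/2 - 1) = m * S * S := by
    rw [show d/2 - 1 = d/2 - 2 + 1 by ring, Real.rpow_add hSpos, Real.rpow_one, e2]
  rw [e1, e2, e3, e4]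
  have hSge : 2*(d+2)*((n:ℝ)+d+4)+1 ≤ S := by
    have := mul_pos hk0 ht; simp only [hSdef]; linarith
  have hkge : 4*((n:ℝ)+d+2)+1 ≤ k := hk
  have hrS : r2 ≤ S := by simp only [hSdef]; linarith
  have key := keyineq (n:ℝ) d S k r2 hnR hd hSge hkge hr2 hrS
  have big := mul_le_mul_of_nonneg_left key (show (0:ℝ) ≤ d/2 * m by positivity)
  nlinarith [big]
end
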